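/- There exist constants b > 0 and γ̄ > 0, depending only on μ, L and K, such that for every stepsize γ with 0 < γ < γ̄ and every momentum parameter β with 0 ≤ β ≤ b·√γ, the IAG-M iterates converge globally linearly: there exists r ∈ [0, 1) such that dist_k ≤ r^k · dist_0 for all k ≥ 0. -/

import Mathlib

open Set Finset InnerProductSpace

variable {E : Type*} [NormedAddCommGroup E] [InnerProductSpace ℝ E] [CompleteSpace E]

local notation "⟪" x ", " y "⟫" => @inner ℝ _ _ x y

lemma hasGradientAt_finset_sum {ι : Type*} (s : Finset ι) (f : ι → E → ℝ) (G : ι → E) (z : E)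
    (hf : ∀ i ∈ s, HasGradientAt (f i) (G i) z) :
    HasGradientAt (fun y => ∑ i ∈ s, f i y) (∑ i ∈ s, G i) z := by
  rw [hasGradientAt_iff_hasFDerivAt, map_sum]
  exact HasFDerivAt.fun_sum (fun i hi => (hf i hi))

lemma hasGradientAt_const_mul_norm_sq (c : ℝ) (z : E) :
    HasGradientAt (fun y : E => c * ‖y‖ ^ 2) ((2 * c) • z) z := by
  rw [hasGradientAt_iff_hasFDerivAt]
  have h := ((hasStrictFDerivAt_norm_sq z).hasFDerivAt).const_mul c
  refine h.congr_fderiv ?_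
  ext y
  simp [toDual_apply_apply, real_inner_smul_left, real_inner_smul_left]
  ring

lemma HasGradientAt.sub' {f g : E → ℝ} {f' g' : E} {z : E}
    (hf : HasGradientAt f f' z) (hg : HasGradientAt g g' z) :
    HasGradientAt (fun y => f y - g y) (f' - g') z := by
  rw [hasGradientAt_iff_hasFDerivAt, map_sub]
  exact HasFDerivAt.sub hf hg

lemma firstorder_convex {g : E → ℝ} (hg : ConvexOn ℝ Set.univ g) {z w G : E}
    (hG : HasGradientAt g G z) : g z + ⟪G, w - z⟫ ≤ g w := by
  set φ : ℝ → ℝ := fun t => g (z + t • (w - z)) with hφ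
  have hline : ∀ t : ℝ, HasDerivAt (fun t : ℝ => z + t • (w - z)) (w - z) t := by
    intro t
    simpa using ((hasDerivAt_id t).smul_const (w - z)).const_add z
  have hφd : HasDerivAt φ ⟪G, w - z⟫ 0 := by
    have hF : HasFDerivAt g (toDual ℝ E G) (z + (0:ℝ) • (w - z)) := by
      simpa using (hasGradientAt_iff_hasFDerivAt.1 hG)
    have h0 := hF.comp_hasDerivAt 0 (hline 0)
    simp only [toDual_apply_apply] at h0
    exact h0
  have hφc : ConvexOn ℝ Set.univ φ := by
    have h1 := hg.comp_affineMap (AffineMap.lineMap z w)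
    have he : (g ∘ (AffineMap.lineMap z w)) = φ := by
      funext t; simp [φ, AffineMap.lineMap_apply, add_comm]
    rw [he] at h1
    simpa using h1
  have hsl := hφc.le_slope_of_hasDerivAt (mem_univ (0:ℝ)) (mem_univ (1:ℝ)) one_pos hφd
  rw [slope_def_field] at hsl
  simp only [φ, one_smul, zero_smul, add_zero, add_sub_cancel] at hsl
  norm_num at hsl
  linarith

lemma strong_mono_at_min {F : E → ℝ} {GF : E → E} {μ : ℝ} (hμ : 0 < μ)
    (hgrad : ∀ z, HasGradientAt F (GF z) z)
    (hconv : ConvexOn ℝ Set.univ (fun y => F y - μ / 2 * ‖y‖ ^ 2))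
    {xs : E} (hmin : ∀ y, F xs ≤ F y) (z : E) :
    μ / 2 * ‖z - xs‖ ^ 2 ≤ ⟪GF z, z - xs⟫ := by
  have hgz : HasGradientAt (fun y => F y - μ / 2 * ‖y‖ ^ 2) (GF z - μ • z) z := by
    have h2 := hasGradientAt_const_mul_norm_sq (μ/2) z
    have h22 : 2 * (μ/2) = μ := by ring
    rw [h22] at h2
    exact (hgrad z).sub' h2
  have h1 := firstorder_convex hconv (w := xs) hgz
  have h2 : ⟪GF z - μ • z, xs - z⟫ = ⟪GF z, xs - z⟫ - μ * ⟪z, xs - z⟫ := by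
    rw [inner_sub_left, real_inner_smul_left]
  have h3 : ‖z - xs‖ ^ 2 = ‖z‖ ^ 2 - 2 * ⟪z, xs⟫ + ‖xs‖ ^ 2 := norm_sub_sq_real z xs
  have h4 : ⟪z, xs - z⟫ = ⟪z, xs⟫ - ‖z‖ ^ 2 := by
    rw [inner_sub_right, real_inner_self_eq_norm_sq]
  have h5 : ⟪GF z, z - xs⟫ = -⟪GF z, xs - z⟫ := by
    rw [← inner_neg_right]; congr 1; abel
  have h6 := hmin z
  rw [h2, h4] at h1
  have h3' : μ / 2 * ‖z - xs‖ ^ 2 = μ / 2 * ‖z‖ ^ 2 - μ * ⟪z, xs⟫ + μ / 2 * ‖xs‖ ^ 2 := by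
    rw [h3]; ring
  have h1' : F z - μ / 2 * ‖z‖ ^ 2 + (⟪GF z, xs - z⟫ - (μ * ⟪z, xs⟫ - μ * ‖z‖ ^ 2)) ≤
      F xs - μ / 2 * ‖xs‖ ^ 2 := by
    rw [mul_sub] at h1; exact h1
  linarith

lemma key_contraction {GF : E → E} {μ L γ : ℝ} (hμ : 0 < μ) (hμL : μ ≤ L)
    {xs : E}
    (hsc : ∀ z : E, μ / 2 * ‖z - xs‖ ^ 2 ≤ ⟪GF z, z - xs⟫)
    (hLip : ∀ z : E, ‖GF z‖ ≤ L * ‖z - xs‖)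
    (hγ0 : 0 < γ) (hγ2 : γ * L ^ 2 ≤ μ / 2) (z : E) :
    ‖z - γ • GF z - xs‖ ≤ (1 - γ * μ / 4) * ‖z - xs‖ := by
  set a := z - xs with ha
  set v := GF z with hv
  have hsub : z - γ • v - xs = a - γ • v := by rw [ha]; abel
  have hexp : ‖a - γ • v‖ ^ 2 = ‖a‖ ^ 2 - 2 * (γ * ⟪v, a⟫) + γ ^ 2 * ‖v‖ ^ 2 := by
    rw [norm_sub_sq_real, real_inner_smul_right, norm_smul]
    rw [Real.norm_eq_abs, abs_of_pos hγ0, mul_pow, real_inner_comm]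
  have hvn : ‖v‖ ^ 2 ≤ L ^ 2 * ‖a‖ ^ 2 := by
    have := hLip z
    nlinarith [norm_nonneg v, norm_nonneg a, mul_nonneg hμ.le (le_trans hμ.le hμL)]
  have hin := hsc z
  have hμ2 : γ * μ ≤ 1 / 2 := by
    nlinarith [mul_le_mul_of_nonneg_left hμL (mul_nonneg hγ0.le hμ.le),
      mul_le_mul_of_nonneg_right hμL (mul_nonneg hγ0.le (le_trans hμ.le hμL)), hμ]
  have hsq : ‖a - γ • v‖ ^ 2 ≤ ((1 - γ * μ / 4) * ‖a‖) ^ 2 := by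
    rw [hexp, mul_pow]
    nlinarith [sq_nonneg (‖a‖), sq_nonneg (γ*μ), mul_le_mul_of_nonneg_left hin hγ0.le,
      mul_le_mul_of_nonneg_right hγ2 (mul_nonneg hγ0.le (sq_nonneg ‖a‖)), sq_nonneg γ]
  rw [hsub]
  have h1 : (0:ℝ) ≤ (1 - γ * μ / 4) * ‖a‖ := by
    apply mul_nonneg _ (norm_nonneg _); nlinarith
  calc ‖a - γ • v‖ = Real.sqrt (‖a - γ • v‖ ^ 2) := by
        rw [Real.sqrt_sq (norm_nonneg _)]
    _ ≤ Real.sqrt (((1 - γ * μ / 4) * ‖a‖) ^ 2) := Real.sqrt_le_sqrt hsq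
    _ = (1 - γ * μ / 4) * ‖a‖ := Real.sqrt_sq h1

lemma pow_tail_bound {r : ℝ} (hr0 : 0 ≤ r) (hr1 : r ≤ 1) {K : ℕ} (hrK : 1/2 ≤ r^K)
    {k l : ℕ} (hl : k - K ≤ l) : r ^ l ≤ 2 * r ^ k := by
  have h1 : r ^ l ≤ r ^ (k - K) := pow_le_pow_of_le_one hr0 hr1 hl
  rcases le_or_gt K k with h | h
  · have h2 : r ^ (k - K) * r ^ K = r ^ k := by rw [← pow_add]; congr 1; omega
    have hK0 : (0:ℝ) ≤ r ^ (k - K) := pow_nonneg hr0 _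
    nlinarith [mul_le_mul_of_nonneg_left hrK hK0]
  · have hk0 : k - K = 0 := by omega
    rw [hk0, pow_zero] at h1
    have h2 : r ^ K ≤ r ^ k := pow_le_pow_of_le_one hr0 hr1 h.le
    linarith
set_option maxHeartbeats 1600000 in
theorem iagm_global_linear_convergence
    (μ L : ℝ) (hμ : 0 < μ) (hμL : μ ≤ L)
    (K : ℕ) (hK : 1 ≤ K) :
    ∃ b : ℝ, 0 < b ∧ ∃ γbar : ℝ, 0 < γbar ∧
      ∀ (n m : ℕ), 1 ≤ m →
      ∀ (f : Fin m → EuclideanSpace ℝ (Fin n) → ℝ)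
        (Li : Fin m → ℝ), (∀ i, 0 ≤ Li i) → L = ∑ i, Li i →
        (∀ i, ConvexOn ℝ Set.univ (f i)) →
        (∀ i, Differentiable ℝ (f i)) →
        (∀ i y z, ‖gradient (f i) y - gradient (f i) z‖ ≤ Li i * ‖y - z‖) →
      ∀ (τ : Fin m → ℕ → ℕ),
        (∀ i k, k - K ≤ τ i k ∧ τ i k ≤ k) → (∀ i, τ i 0 = 0) →
      ∀ (F : EuclideanSpace ℝ (Fin n) → ℝ), F = (fun y => ∑ i, f i y) →
        ConvexOn ℝ Set.univ (fun y => F y - μ / 2 * ‖y‖ ^ 2) →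
      ∀ (xs : EuclideanSpace ℝ (Fin n)), (∀ y, F xs ≤ F y) → gradient F xs = 0 →
      ∀ (x g e : ℕ → EuclideanSpace ℝ (Fin n)),
        (∀ k, g k = ∑ i, gradient (f i) (x (τ i k))) →
        (∀ k, e k = g k - gradient F (x k)) →
      ∀ (γ β : ℝ), 0 < γ → γ < γbar → 0 ≤ β → β ≤ b * Real.sqrt γ →
        x 1 = x 0 - γ • g 0 →
        (∀ k, 1 ≤ k → x (k + 1) = x k - γ • g k + β • (x k - x (k - 1))) →
      ∃ r : ℝ, 0 ≤ r ∧ r < 1 ∧ ∀ k, ‖x k - xs‖ ≤ r ^ k * ‖x 0 - xs‖ := by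
  have hL : 0 < L := lt_of_lt_of_le hμ hμL
  have hK0 : (0:ℝ) < (K:ℝ) := by exact_mod_cast Nat.lt_of_lt_of_le Nat.zero_lt_one hK
  have hLne : L ≠ 0 := ne_of_gt hL
  have hKne : (K:ℝ) ≠ 0 := ne_of_gt hK0
  have hL2pos : (0:ℝ) < L^2 := pow_pos hL 2
  refine ⟨μ / (256 * L), div_pos hμ (by linarith), ?_⟩
  refine ⟨min 1 (min (μ/(2*L^2)) (min (4/((K:ℝ)*μ)) (min (L/(32*L^2*(K:ℝ)))
      ((μ/(512*L^2*(K:ℝ)))^2)))), ?_, ?_⟩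
  · have p1 : (0:ℝ) < 1 := one_pos
    have p2 : (0:ℝ) < μ/(2*L^2) := div_pos hμ (by linarith)
    have p3 : (0:ℝ) < 4/((K:ℝ)*μ) := div_pos (by norm_num) (mul_pos hK0 hμ)
    have p4 : (0:ℝ) < L/(32*L^2*(K:ℝ)) := div_pos hL (mul_pos (by linarith) hK0)
    have p5 : (0:ℝ) < (μ/(512*L^2*(K:ℝ)))^2 :=
      pow_pos (div_pos hμ (mul_pos (by linarith) hK0)) 2
    exact lt_min p1 (lt_min p2 (lt_min p3 (lt_min p4 p5)))
  intro n m hm f Li hLi0 hLsum hconv_i hdiff hLip τ hτ hτ0 F hF hsconv xs hmin hgradxs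
    x g e hg he γ β hγ0 hγbar hβ0 hβb hx1 hrec
  -- extract numeric consequences of γ < γbar
  obtain ⟨hm1, hm2'⟩ := lt_min_iff.mp hγbar
  obtain ⟨hm2, hm3'⟩ := lt_min_iff.mp hm2'
  obtain ⟨hm3, hm4'⟩ := lt_min_iff.mp hm3'
  obtain ⟨hm4, hm5⟩ := lt_min_iff.mp hm4'
  have hγ1 : γ ≤ 1 := hm1.le
  have hγL2 : γ * L ^ 2 ≤ μ / 2 := by
    have h2L2 : (0:ℝ) < 2*L^2 := by linarith
    have h := (lt_div_iff₀ h2L2).mp hm2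
    have h2 : γ*(2*L^2) = 2*(γ*L^2) := by ring
    linarith
  have hKγμ : (K:ℝ) * (γ * μ) ≤ 4 := by
    have hKμ : (0:ℝ) < (K:ℝ)*μ := mul_pos hK0 hμ
    have h := (lt_div_iff₀ hKμ).mp hm3
    have h2 : γ*((K:ℝ)*μ) = (K:ℝ)*(γ*μ) := by ring
    linarith
  have hγ4 : 32*L^2*(K:ℝ)*γ ≤ L := by
    have hpos : (0:ℝ) < 32*L^2*(K:ℝ) := mul_pos (by linarith) hK0
    have h := (lt_div_iff₀ hpos).mp hm4
    have h2 : γ*(32*L^2*(K:ℝ)) = 32*L^2*(K:ℝ)*γ := by ring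
    linarith
  obtain ⟨sγ, hsγdef⟩ : ∃ s : ℝ, s = Real.sqrt γ := ⟨_, rfl⟩
  rw [← hsγdef] at hβb
  have hsγ0 : 0 ≤ sγ := by rw [hsγdef]; exact Real.sqrt_nonneg γ
  have hsγsq : sγ^2 = γ := by rw [hsγdef]; exact Real.sq_sqrt hγ0.le
  have hsγ1 : sγ ≤ 1 := by rw [hsγdef]; exact Real.sqrt_le_one.mpr hγ1
  have hγsγ : γ ≤ sγ := by
    rw [← hsγsq, sq]
    exact mul_le_of_le_one_left hsγ0 hsγ1
  have hγ5 : 32*L^2*(K:ℝ)*sγ ≤ μ/16 := by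
    have hA : (0:ℝ) < μ/(512*L^2*(K:ℝ)) := div_pos hμ (mul_pos (by linarith) hK0)
    have hsle : sγ ≤ μ/(512*L^2*(K:ℝ)) := by
      rw [hsγdef]
      calc Real.sqrt γ ≤ Real.sqrt ((μ/(512*L^2*(K:ℝ)))^2) := Real.sqrt_le_sqrt hm5.le
        _ = μ/(512*L^2*(K:ℝ)) := Real.sqrt_sq hA.le
    have hkey : 32*L^2*(K:ℝ)*(μ/(512*L^2*(K:ℝ))) = μ/16 := by
      field_simp
      ring
    calc 32*L^2*(K:ℝ)*sγ ≤ 32*L^2*(K:ℝ)*(μ/(512*L^2*(K:ℝ))) := by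
          apply mul_le_mul_of_nonneg_left hsle (by positivity)
      _ = μ/16 := hkey
  have hγμ : γ * μ ≤ 1/2 := by
    have h1 : γ*μ ≤ γ*L := mul_le_mul_of_nonneg_left hμL hγ0.le
    have h2 : (γ*μ)*μ ≤ (γ*L)*L :=
      mul_le_mul h1 hμL hμ.le (mul_nonneg hγ0.le hL.le)
    have h3 : (γ*L)*L = γ*L^2 := by ring
    have h4 : (γ*μ)*μ ≤ μ/2 := by rw [h3] at h2; linarith
    have h5 : γ*μ ≤ (μ/2)/μ := (le_div_iff₀ hμ).mpr h4
    have h6 : (μ/2)/μ = 1/2 := by field_simp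
    linarith
  -- gradient facts
  obtain ⟨GF, hGFdef⟩ : ∃ G : EuclideanSpace ℝ (Fin n) → EuclideanSpace ℝ (Fin n),
      G = fun z => ∑ i, gradient (f i) z := ⟨_, rfl⟩
  have hFg : ∀ z, HasGradientAt F (GF z) z := by
    intro z
    rw [hF, hGFdef]
    exact hasGradientAt_finset_sum Finset.univ f (fun i => gradient (f i) z) z
      (fun i _ => ((hdiff i) z).hasGradientAt)
  have hgradF : ∀ z, gradient F z = GF z := fun z => (hFg z).gradient
  have hGFxs : GF xs = 0 := by rw [← hgradF xs]; exact hgradxs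
  have hLipGF : ∀ y z, ‖GF y - GF z‖ ≤ L * ‖y - z‖ := by
    intro y z
    have h1 : GF y - GF z = ∑ i, (gradient (f i) y - gradient (f i) z) := by
      rw [hGFdef, Finset.sum_sub_distrib]
    rw [h1, hLsum]
    calc ‖∑ i, (gradient (f i) y - gradient (f i) z)‖
        ≤ ∑ i, ‖gradient (f i) y - gradient (f i) z‖ := norm_sum_le _ _
      _ ≤ ∑ i, Li i * ‖y - z‖ := Finset.sum_le_sum (fun i _ => hLip i y z)
      _ = (∑ i, Li i) * ‖y - z‖ := by rw [Finset.sum_mul]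
  have hGFnorm : ∀ z, ‖GF z‖ ≤ L * ‖z - xs‖ := by
    intro z
    have := hLipGF z xs
    rwa [hGFxs, sub_zero] at this
  have hsc : ∀ z, μ/2 * ‖z - xs‖^2 ≤ @inner ℝ _ _ (GF z) (z - xs) :=
    strong_mono_at_min hμ hFg hsconv hmin
  have hcontr : ∀ z, ‖z - γ • GF z - xs‖ ≤ (1 - γ*μ/4) * ‖z - xs‖ :=
    key_contraction hμ hμL hsc hGFnorm hγ0 hγL2
  -- the rate
  obtain ⟨r, hrdef⟩ : ∃ r' : ℝ, r' = 1 - γ*μ/8 := ⟨_, rfl⟩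
  have hr0 : (15:ℝ)/16 ≤ r := by rw [hrdef]; linarith
  have hr0' : (0:ℝ) ≤ r := le_trans (by norm_num) hr0
  have hr1 : r < 1 := by rw [hrdef]; linarith [mul_pos hγ0 hμ]
  have hρr : 1 - γ*μ/4 ≤ r := by rw [hrdef]; linarith [mul_pos hγ0 hμ]
  have hρ0 : (0:ℝ) ≤ 1 - γ*μ/4 := by linarith
  have hrK : (1:ℝ)/2 ≤ r^K := by
    have hber := one_add_mul_le_pow (a := -(γ*μ/8)) (by linarith) K
    have h1 : (1:ℝ) + -(γ*μ/8) = r := by rw [hrdef]; ring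
    rw [h1] at hber
    have h2 : (K:ℝ) * -(γ*μ/8) = -((K:ℝ)*(γ*μ))/8 := by ring
    linarith
  obtain ⟨D0, hD0def⟩ : ∃ d : ℝ, d = ‖x 0 - xs‖ := ⟨_, rfl⟩
  have hD0 : 0 ≤ D0 := by rw [hD0def]; exact norm_nonneg _
  obtain ⟨c, hcdef⟩ : ∃ c' : ℝ, c' = 16*L := ⟨_, rfl⟩
  have hc0 : (0:ℝ) ≤ c := by rw [hcdef]; linarith
  have hcs0 : (0:ℝ) ≤ c * sγ := mul_nonneg hc0 hsγ0
  -- main induction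
  have main : ∀ k : ℕ, ‖x k - xs‖ ≤ r^k * D0 ∧
      ∀ p, k = p + 1 → ‖x k - x p‖ ≤ c * sγ * r^k * D0 := by
    intro k
    induction k using Nat.strong_induction_on with
    | _ k IH =>
      match k with
      | 0 => exact ⟨by simp [hD0def], fun p hp => by omega⟩
      | 1 =>
        have hg0 : g 0 = GF (x 0) := by
          rw [hg 0, hGFdef]
          exact Finset.sum_congr rfl (fun i _ => by rw [hτ0 i])
        constructor
        · calc ‖x 1 - xs‖ = ‖x 0 - γ • GF (x 0) - xs‖ := by rw [hx1, hg0]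
            _ ≤ (1 - γ*μ/4) * ‖x 0 - xs‖ := hcontr (x 0)
            _ = (1 - γ*μ/4) * D0 := by rw [hD0def]
            _ ≤ r * D0 := mul_le_mul_of_nonneg_right hρr hD0
            _ = r^1 * D0 := by rw [pow_one]
        · intro p hp
          have hp0 : p = 0 := by omega
          subst hp0
          have hd : x 1 - x 0 = -(γ • GF (x 0)) := by rw [hx1, hg0]; abel
          have hscal : γ * L ≤ c * sγ * r^1 := by
            rw [hcdef, pow_one]
            have hsl0 : 0 ≤ sγ * L := mul_nonneg hsγ0 hL.le
            have h1 : γ * L ≤ sγ * L := mul_le_mul_of_nonneg_right hγsγ hL.le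
            have h2 : 16 * (sγ*L) * (15/16) ≤ 16*(sγ*L)*r :=
              mul_le_mul_of_nonneg_left hr0 (by linarith)
            have h3 : 16*(sγ*L)*r = 16*L*sγ*r := by ring
            linarith
          calc ‖x 1 - x 0‖ = γ * ‖GF (x 0)‖ := by
                rw [hd, norm_neg, norm_smul, Real.norm_eq_abs, abs_of_pos hγ0]
            _ ≤ γ * (L * D0) := by
                rw [hD0def]
                exact mul_le_mul_of_nonneg_left (hGFnorm (x 0)) hγ0.le
            _ = (γ * L) * D0 := by ring
            _ ≤ (c * sγ * r^1) * D0 := mul_le_mul_of_nonneg_right hscal hD0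
      | (j+2) =>
        have IHD : ∀ l, l ≤ j+1 → ‖x l - xs‖ ≤ r^l * D0 :=
          fun l hl => (IH l (by omega)).1
        have IHd : ∀ p, p + 1 ≤ j+1 → ‖x (p+1) - x p‖ ≤ c * sγ * r^(p+1) * D0 :=
          fun p hp => (IH (p+1) (by omega)).2 p rfl
        obtain ⟨X, hXdef⟩ : ∃ X' : ℝ, X' = r^(j+1) * D0 := ⟨_, rfl⟩
        have hX0 : 0 ≤ X := by rw [hXdef]; exact mul_nonneg (pow_nonneg hr0' _) hD0
        -- bound on ‖x (j+1) - x (τ i (j+1))‖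
        have S1 : ∀ i, ‖x (j+1) - x (τ i (j+1))‖ ≤ (K:ℝ) * (c * sγ * (2 * r^(j+1)) * D0) := by
          intro i
          obtain ⟨hτ1, hτ2⟩ := hτ i (j+1)
          have hB0 : (0:ℝ) ≤ c * sγ * (2 * r^(j+1)) * D0 := by
            have := pow_nonneg hr0' (j+1)
            apply mul_nonneg (mul_nonneg hcs0 (by linarith)) hD0
          have hdist := dist_le_Ico_sum_dist x hτ2
          have hterm : ∀ l ∈ Finset.Ico (τ i (j+1)) (j+1),
              dist (x l) (x (l+1)) ≤ c * sγ * (2 * r^(j+1)) * D0 := by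
            intro l hl
            rw [Finset.mem_Ico] at hl
            have h1 : ‖x (l+1) - x l‖ ≤ c * sγ * r^(l+1) * D0 := IHd l (by omega)
            have h2 : r^(l+1) ≤ 2 * r^(j+1) :=
              pow_tail_bound hr0' hr1.le hrK (by omega)
            have h3 : c * sγ * r^(l+1) * D0 ≤ c * sγ * (2 * r^(j+1)) * D0 :=
              mul_le_mul_of_nonneg_right (mul_le_mul_of_nonneg_left h2 hcs0) hD0
            calc dist (x l) (x (l+1)) = ‖x (l+1) - x l‖ := by
                  rw [dist_eq_norm, norm_sub_rev]
              _ ≤ c * sγ * r^(l+1) * D0 := h1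
              _ ≤ c * sγ * (2 * r^(j+1)) * D0 := h3
          have hcard : ((Finset.Ico (τ i (j+1)) (j+1)).card : ℝ) ≤ (K:ℝ) := by
            rw [Nat.card_Ico]
            exact_mod_cast Nat.cast_le.mpr (by omega : (j+1) - τ i (j+1) ≤ K)
          calc ‖x (j+1) - x (τ i (j+1))‖ = dist (x (τ i (j+1))) (x (j+1)) := by
                rw [dist_eq_norm, norm_sub_rev]
            _ ≤ ∑ l ∈ Finset.Ico (τ i (j+1)) (j+1), dist (x l) (x (l+1)) := hdist
            _ ≤ ((Finset.Ico (τ i (j+1)) (j+1)).card : ℝ) * (c * sγ * (2 * r^(j+1)) * D0) := by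
                have := Finset.sum_le_card_nsmul _ _ _ hterm
                rwa [nsmul_eq_mul] at this
            _ ≤ (K:ℝ) * (c * sγ * (2 * r^(j+1)) * D0) :=
                mul_le_mul_of_nonneg_right hcard hB0
        -- gradient error bound
        have S2 : ‖g (j+1) - GF (x (j+1))‖ ≤ L * ((K:ℝ) * (c * sγ * (2 * r^(j+1)) * D0)) := by
          have hsplit : g (j+1) - GF (x (j+1)) =
              ∑ i, (gradient (f i) (x (τ i (j+1))) - gradient (f i) (x (j+1))) := by
            rw [hg (j+1), hGFdef, Finset.sum_sub_distrib]
          rw [hsplit, hLsum]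
          calc ‖∑ i, (gradient (f i) (x (τ i (j+1))) - gradient (f i) (x (j+1)))‖
              ≤ ∑ i, ‖gradient (f i) (x (τ i (j+1))) - gradient (f i) (x (j+1))‖ :=
                norm_sum_le _ _
            _ ≤ ∑ i, Li i * ((K:ℝ) * (c * sγ * (2 * r^(j+1)) * D0)) := by
                apply Finset.sum_le_sum
                intro i _
                calc ‖gradient (f i) (x (τ i (j+1))) - gradient (f i) (x (j+1))‖
                    ≤ Li i * ‖x (τ i (j+1)) - x (j+1)‖ := hLip i _ _
                  _ = Li i * ‖x (j+1) - x (τ i (j+1))‖ := by rw [norm_sub_rev]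
                  _ ≤ Li i * ((K:ℝ) * (c * sγ * (2 * r^(j+1)) * D0)) :=
                      mul_le_mul_of_nonneg_left (S1 i) (hLi0 i)
            _ = (∑ i, Li i) * ((K:ℝ) * (c * sγ * (2 * r^(j+1)) * D0)) := by
                rw [Finset.sum_mul]
        have hx2 : x (j+2) = x (j+1) - γ • g (j+1) + β • (x (j+1) - x j) := by
          have := hrec (j+1) (by omega)
          simpa using this
        have hdprev : ‖x (j+1) - x j‖ ≤ c * sγ * r^(j+1) * D0 := IHd j le_rfl
        -- three scalar coefficient bounds
        have hcoefB : γ * (L * ((K:ℝ) * (c * sγ * 2))) ≤ γ * (μ/16) := by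
          have h1 : L * ((K:ℝ) * (c * sγ * 2)) = 32*L^2*(K:ℝ)*sγ := by rw [hcdef]; ring
          rw [h1]
          exact mul_le_mul_of_nonneg_left hγ5 hγ0.le
        have hcoefC : β * (c * sγ) ≤ γ * (μ/16) := by
          have h1 : β * (c * sγ) ≤ (μ / (256 * L) * sγ) * (c * sγ) :=
            mul_le_mul_of_nonneg_right hβb hcs0
          have h2 : (μ / (256 * L) * sγ) * (c * sγ) = γ * (μ/16) := by
            rw [hcdef, ← hsγsq]
            field_simp
            ring
          linarith
        -- distance step
        have hAid : x (j+2) - xs = (x (j+1) - γ • GF (x (j+1)) - xs)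
            + (-(γ • (g (j+1) - GF (x (j+1))))) + β • (x (j+1) - x j) := by
          rw [hx2]
          simp only [smul_sub]
          abel
        have hnA : ‖x (j+1) - γ • GF (x (j+1)) - xs‖ ≤ (1 - γ*μ/4) * X := by
          calc ‖x (j+1) - γ • GF (x (j+1)) - xs‖ ≤ (1 - γ*μ/4) * ‖x (j+1) - xs‖ :=
                hcontr (x (j+1))
            _ ≤ (1 - γ*μ/4) * X := by
                rw [hXdef, hD0def]
                exact mul_le_mul_of_nonneg_left (by rw [← hD0def]; exact IHD (j+1) le_rfl) hρ0
        have hnB : ‖-(γ • (g (j+1) - GF (x (j+1))))‖ ≤ (γ * (μ/16)) * X := by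
          rw [norm_neg, norm_smul, Real.norm_eq_abs, abs_of_pos hγ0]
          calc γ * ‖g (j+1) - GF (x (j+1))‖
              ≤ γ * (L * ((K:ℝ) * (c * sγ * (2 * r^(j+1)) * D0))) :=
                mul_le_mul_of_nonneg_left S2 hγ0.le
            _ = (γ * (L * ((K:ℝ) * (c * sγ * 2)))) * X := by rw [hXdef]; ring
            _ ≤ (γ * (μ/16)) * X := mul_le_mul_of_nonneg_right hcoefB hX0
        have hnC : ‖β • (x (j+1) - x j)‖ ≤ (γ * (μ/16)) * X := by
          rw [norm_smul, Real.norm_eq_abs, abs_of_nonneg hβ0]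
          calc β * ‖x (j+1) - x j‖ ≤ β * (c * sγ * r^(j+1) * D0) :=
                mul_le_mul_of_nonneg_left hdprev hβ0
            _ = (β * (c * sγ)) * X := by rw [hXdef]; ring
            _ ≤ (γ * (μ/16)) * X := mul_le_mul_of_nonneg_right hcoefC hX0
        have hDstep : ‖x (j+2) - xs‖ ≤ r^(j+2) * D0 := by
          calc ‖x (j+2) - xs‖ ≤ ‖x (j+1) - γ • GF (x (j+1)) - xs‖
                + ‖-(γ • (g (j+1) - GF (x (j+1))))‖ + ‖β • (x (j+1) - x j)‖ := by
                rw [hAid]; exact norm_add₃_le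
            _ ≤ (1 - γ*μ/4) * X + (γ * (μ/16)) * X + (γ * (μ/16)) * X := by
                linarith [hnA, hnB, hnC]
            _ = r * X := by rw [hrdef]; ring
            _ = r^(j+2) * D0 := by rw [hXdef, hrdef]; ring
        refine ⟨hDstep, ?_⟩
        intro p hp
        have hpj : p = j + 1 := by omega
        subst hpj
        have hdid : x (j+2) - x (j+1) = -(γ • g (j+1)) + β • (x (j+1) - x j) := by
          rw [hx2]; abel
        have hgk : ‖g (j+1)‖ ≤ L * X + L * ((K:ℝ) * (c * sγ * (2 * r^(j+1)) * D0)) := by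
          calc ‖g (j+1)‖ = ‖GF (x (j+1)) + (g (j+1) - GF (x (j+1)))‖ := by
                congr 1; abel
            _ ≤ ‖GF (x (j+1))‖ + ‖g (j+1) - GF (x (j+1))‖ := norm_add_le _ _
            _ ≤ L * X + L * ((K:ℝ) * (c * sγ * (2 * r^(j+1)) * D0)) := by
                have h1 : ‖GF (x (j+1))‖ ≤ L * X := by
                  calc ‖GF (x (j+1))‖ ≤ L * ‖x (j+1) - xs‖ := hGFnorm _
                    _ ≤ L * X := by
                      rw [hXdef]
                      exact mul_le_mul_of_nonneg_left (IHD (j+1) le_rfl) hL.le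
                linarith [S2]
        have hterm1 : γ * (L * X) ≤ (sγ * L) * X := by
          have h1 : γ * L ≤ sγ * L := mul_le_mul_of_nonneg_right hγsγ hL.le
          have h2 := mul_le_mul_of_nonneg_right h1 hX0
          have h3 : γ * L * X = γ * (L * X) := by ring
          linarith
        have hterm2 : γ * (L * ((K:ℝ) * (c * sγ * (2 * r^(j+1)) * D0))) ≤ (sγ * L) * X := by
          have h1 : γ * (L * ((K:ℝ) * (c * sγ * 2))) ≤ γ * (μ/16) := hcoefB
          have h2 : γ * (μ/16) ≤ sγ * L :=
            mul_le_mul hγsγ (by linarith) (by linarith) hsγ0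
          have h3 : γ * (L * ((K:ℝ) * (c * sγ * (2 * r^(j+1)) * D0)))
              = (γ * (L * ((K:ℝ) * (c * sγ * 2)))) * X := by rw [hXdef]; ring
          rw [h3]
          exact mul_le_mul_of_nonneg_right (le_trans h1 h2) hX0
        have hterm3 : β * (c * sγ * r^(j+1) * D0) ≤ (sγ * L) * X := by
          have h2 : γ * (μ/16) ≤ sγ * L :=
            mul_le_mul hγsγ (by linarith) (by linarith) hsγ0
          have h3 : β * (c * sγ * r^(j+1) * D0) = (β * (c * sγ)) * X := by
            rw [hXdef]; ring
          rw [h3]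
          exact mul_le_mul_of_nonneg_right (le_trans hcoefC h2) hX0
        have hfin : 3 * ((sγ * L) * X) ≤ c * sγ * r^(j+2) * D0 := by
          have h1 : c * sγ * r^(j+2) * D0 = (c * r) * ((sγ) * X) := by
            rw [hXdef, hcdef]; ring
          rw [h1]
          have h2 : (3:ℝ) * L ≤ c * r := by
            rw [hcdef]
            have h21 : 16*L*(15/16) ≤ 16*L*r := mul_le_mul_of_nonneg_left hr0 (by linarith)
            linarith
          have h3 : 0 ≤ sγ * X := mul_nonneg hsγ0 hX0
          have h4 := mul_le_mul_of_nonneg_right h2 h3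
          have h5 : 3*L*(sγ*X) = 3*((sγ*L)*X) := by ring
          linarith
        calc ‖x (j+2) - x (j+1)‖ = ‖-(γ • g (j+1)) + β • (x (j+1) - x j)‖ := by
              rw [hdid]
          _ ≤ ‖-(γ • g (j+1))‖ + ‖β • (x (j+1) - x j)‖ := norm_add_le _ _
          _ = γ * ‖g (j+1)‖ + β * ‖x (j+1) - x j‖ := by
              rw [norm_neg, norm_smul, norm_smul, Real.norm_eq_abs, Real.norm_eq_abs,
                abs_of_pos hγ0, abs_of_nonneg hβ0]
          _ ≤ γ * (L * X + L * ((K:ℝ) * (c * sγ * (2 * r^(j+1)) * D0)))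
              + β * (c * sγ * r^(j+1) * D0) := by
              have := mul_le_mul_of_nonneg_left hgk hγ0.le
              have := mul_le_mul_of_nonneg_left hdprev hβ0
              linarith
          _ ≤ (sγ * L) * X + (sγ * L) * X + (sγ * L) * X := by
              rw [mul_add]
              linarith [hterm1, hterm2, hterm3]
          _ = 3 * ((sγ * L) * X) := by ring
          _ ≤ c * sγ * r^(j+2) * D0 := hfin
  exact ⟨r, hr0', hr1, fun k => by rw [← hD0def]; exact (main k).1⟩
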